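/- Let γ ∈ [0,1), z ∈ ℝ^d, and let (φ_t)_{t≥0} be a sequence in ℝ^d with ‖φ_t‖ ≤ ρ for all t, and ψ_t = Σ_{i=0}^∞ γ^i φ_{t+i}. If the Cesàro averages (1/T) Σ_{t=0}^{T−1} φ_t converge to some limit L ∈ ℝ^d, then ‖L − z‖ ≤ sup_t ‖(1−γ)ψ_t − z‖. -/

import Mathlib

open Filter Finset in
theorem stmt_4 (d : ℕ) (γ ρ : ℝ) (hγ0 : 0 ≤ γ) (hγ1 : γ < 1)
    (z L : EuclideanSpace ℝ (Fin d))
    (φ ψ : ℕ → EuclideanSpace ℝ (Fin d))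
    (hb : ∀ t, ‖φ t‖ ≤ ρ)
    (hψ : ∀ t, HasSum (fun i => γ ^ i • φ (t + i)) (ψ t))
    (hL : Filter.Tendsto (fun T : ℕ => (T : ℝ)⁻¹ • (∑ t ∈ Finset.range T, φ t))
      Filter.atTop (nhds L)) :
    ‖L - z‖ ≤ ⨆ t : ℕ, ‖(1 - γ) • ψ t - z‖ := by
  classical
  have hρ0 : 0 ≤ ρ := le_trans (norm_nonneg _) (hb 0)
  have h1γ : 0 < 1 - γ := by linarith
  -- bound on ψ
  have hψb : ∀ t, ‖ψ t‖ ≤ ρ / (1 - γ) := by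
    intro t
    have hg : HasSum (fun i : ℕ => ρ * γ ^ i) (ρ * (1 - γ)⁻¹) :=
      (hasSum_geometric_of_lt_one hγ0 hγ1).mul_left ρ
    rw [← (hψ t).tsum_eq, div_eq_mul_inv]
    refine tsum_of_norm_bounded hg fun i => ?_
    rw [norm_smul, norm_pow, Real.norm_eq_abs, abs_of_nonneg hγ0, mul_comm]
    exact mul_le_mul_of_nonneg_right (hb _) (pow_nonneg hγ0 i)
  -- recursion ψ t = φ t + γ • ψ (t+1)
  have hrec : ∀ t, ψ t = φ t + γ • ψ (t + 1) := by
    intro t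
    have h1 : HasSum (fun i : ℕ => γ ^ (i + 1) • φ (t + (i + 1))) (γ • ψ (t + 1)) := by
      have h := (hψ (t + 1)).const_smul γ
      convert h using 1
      funext i
      rw [pow_succ, mul_comm (γ ^ i) γ, mul_smul, show t + (i + 1) = t + 1 + i by omega]
    have h2 := (hasSum_nat_add_iff (f := fun i : ℕ => γ ^ i • φ (t + i)) 1).mp h1
    simp only [Finset.range_one, Finset.sum_singleton, pow_zero, one_smul, Nat.add_zero] at h2
    rw [(hψ t).unique h2]
    abel
  -- key partial sum identity
  have key : ∀ T, (1 - γ) • ∑ t ∈ Finset.range T, ψ t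
      = (∑ t ∈ Finset.range T, φ t) + γ • (ψ T - ψ 0) := by
    intro T
    induction T with
    | zero => simp
    | succ n ih =>
      rw [Finset.sum_range_succ, Finset.sum_range_succ, smul_add, ih, hrec n]
      module
  -- the error term tends to 0
  have hz : Filter.Tendsto (fun T : ℕ => (T : ℝ)⁻¹ • (γ • (ψ T - ψ 0))) atTop (nhds 0) := by
    refine squeeze_zero_norm (a := fun T : ℕ => (T : ℝ)⁻¹ * (γ * (2 * (ρ / (1 - γ)))))
      (fun T => ?_) ?_
    · rw [norm_smul, norm_smul, Real.norm_eq_abs, Real.norm_eq_abs,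
        abs_of_nonneg hγ0, abs_of_nonneg (by positivity)]
      gcongr
      calc ‖ψ T - ψ 0‖ ≤ ‖ψ T‖ + ‖ψ 0‖ := norm_sub_le _ _
        _ ≤ ρ / (1 - γ) + ρ / (1 - γ) := add_le_add (hψb T) (hψb 0)
        _ = 2 * (ρ / (1 - γ)) := by ring
    · have h0 : Filter.Tendsto (fun T : ℕ => (T : ℝ)⁻¹) atTop (nhds 0) :=
        tendsto_inv_atTop_nhds_zero_nat
      simpa using h0.mul_const (γ * (2 * (ρ / (1 - γ))))
  -- Cesàro averages of (1-γ)•ψ tend to L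
  have hmain : Filter.Tendsto
      (fun T : ℕ => (T : ℝ)⁻¹ • ((1 - γ) • ∑ t ∈ Finset.range T, ψ t)) atTop (nhds L) := by
    simp only [key, smul_add]
    simpa using hL.add hz
  -- sup is a genuine sup
  have hBdd : BddAbove (Set.range fun t => ‖(1 - γ) • ψ t - z‖) := by
    refine ⟨ρ + ‖z‖, ?_⟩
    rintro x ⟨t, rfl⟩
    calc ‖(1 - γ) • ψ t - z‖ ≤ ‖(1 - γ) • ψ t‖ + ‖z‖ := norm_sub_le _ _
      _ ≤ ρ + ‖z‖ := by
        rw [norm_smul, Real.norm_eq_abs, abs_of_pos h1γ]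
        have h := mul_le_mul_of_nonneg_left (hψb t) h1γ.le
        rw [mul_div_cancel₀ _ h1γ.ne'] at h
        linarith
  set M := ⨆ t : ℕ, ‖(1 - γ) • ψ t - z‖ with hM
  have hle : ∀ t, ‖(1 - γ) • ψ t - z‖ ≤ M := fun t => le_ciSup hBdd t
  -- the bound on averages
  have bound : ∀ T : ℕ, 1 ≤ T →
      ‖(T : ℝ)⁻¹ • ((1 - γ) • ∑ t ∈ Finset.range T, ψ t) - z‖ ≤ M := by
    intro T hT
    have hT0 : (T : ℝ) ≠ 0 := Nat.cast_ne_zero.mpr (by omega)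
    have heq : (T : ℝ)⁻¹ • ((1 - γ) • ∑ t ∈ Finset.range T, ψ t) - z
        = (T : ℝ)⁻¹ • ∑ t ∈ Finset.range T, ((1 - γ) • ψ t - z) := by
      rw [Finset.sum_sub_distrib, Finset.sum_const, Finset.card_range, smul_sub,
        ← Finset.smul_sum, ← Nat.cast_smul_eq_nsmul ℝ T z]
      congr 1
      rw [smul_smul, inv_mul_cancel₀ hT0, one_smul]
    rw [heq, norm_smul, Real.norm_eq_abs, abs_of_nonneg (by positivity)]
    calc (T : ℝ)⁻¹ * ‖∑ t ∈ Finset.range T, ((1 - γ) • ψ t - z)‖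
        ≤ (T : ℝ)⁻¹ * ∑ t ∈ Finset.range T, ‖(1 - γ) • ψ t - z‖ := by
          gcongr
          exact norm_sum_le _ _
      _ ≤ (T : ℝ)⁻¹ * ∑ t ∈ Finset.range T, M := by
          gcongr with t _
          exact hle t
      _ = (T : ℝ)⁻¹ * ((T : ℝ) * M) := by
          rw [Finset.sum_const, Finset.card_range, nsmul_eq_mul]
      _ = M := by field_simp
  have hten : Filter.Tendsto
      (fun T : ℕ => ‖(T : ℝ)⁻¹ • ((1 - γ) • ∑ t ∈ Finset.range T, ψ t) - z‖)
      atTop (nhds ‖L - z‖) := (hmain.sub tendsto_const_nhds).norm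
  exact le_of_tendsto hten (Filter.eventually_atTop.2 ⟨1, fun T hT => bound T hT⟩)
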